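/- Let R be a commutative ring and x₁,…,x_l an unconditioned strong d-sequence such that every element of the ideal 𝔞 lies in the radical of Σ_{i=1}^l x_i R. Then every permutation of x₁,…,x_l is an 𝔞-filter regular sequence; in fact, the ideal Σ_{i=1}^l x_i R annihilates ((Σ_{i∈Λ} x_i R) : Σ_{i∉Λ} x_i R) / (Σ_{i∈Λ} x_i R) for every proper subset Λ ⊊ {1,…,l}. -/

import Mathlib

/-- `x₁, …, x_l` is a d-sequence: `((x₁,…,x_j) : x_{j+1} x_k) = ((x₁,…,x_j) : x_k)`
for all `0 ≤ j < k ≤ l`.  Here `x` is `0`-indexed: `x j` plays the role of `x_{j+1}`,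
and the condition is stated for `j ≤ k` (`0`-based). -/
def IsDSeq {R : Type*} [CommRing R] {l : ℕ} (x : Fin l → R) : Prop :=
  ∀ j k : Fin l, j ≤ k →
    (Ideal.span (x '' {i | i < j})).colon (Ideal.span {x j * x k}) =
      (Ideal.span (x '' {i | i < j})).colon (Ideal.span {x k})

/-- `x₁, …, x_l` is an unconditioned strong d-sequence: `x₁^{n₁}, …, x_l^{n_l}` is a
d-sequence in any order, for all positive integers `n₁, …, n_l`. -/
def IsUSD {R : Type*} [CommRing R] {l : ℕ} (x : Fin l → R) : Prop :=
  ∀ n : Fin l → ℕ, (∀ i, 0 < n i) → ∀ σ : Equiv.Perm (Fin l),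
    IsDSeq (fun i => x (σ i) ^ n (σ i))

/-- `y₁,…,y_l` is an `𝔞`-filter regular sequence: some power `𝔞^m` annihilates
`((y₁,…,y_{j}) : y_{j+1})/(y₁,…,y_{j})` for all `j` (0-based). -/
def IsFilterRegular {R : Type*} [CommRing R] {l : ℕ} (𝔞 : Ideal R) (y : Fin l → R) : Prop :=
  ∃ m : ℕ, ∀ j : Fin l,
    𝔞 ^ m * ((Ideal.span (y '' {i | i < j})).colon (Ideal.span {y j})) ≤
      Ideal.span (y '' {i | i < j})

/-- There is a permutation of `Fin l` putting the elements of `Λ` first,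
then `j`, then `k`. -/
lemma exists_perm_block {l : ℕ} (Λ : Set (Fin l)) (j k : Fin l)
    (hj : j ∉ Λ) (hk : k ∉ Λ) (hjk : j ≠ k) :
    ∃ (σ : Equiv.Perm (Fin l)) (p q : Fin l), p ≤ q ∧
      (⇑σ) '' {i | i < p} = Λ ∧ σ p = j ∧ σ q = k := by
  classical
  set s : Finset (Fin l) := Λ.toFinset with hs
  have hjs : j ∉ s := by simpa [hs] using hj
  have hks : k ∉ s := by simpa [hs] using hk
  set t : Finset (Fin l) := (insert j (insert k s))ᶜ with ht
  set A : List (Fin l) := s.sort (· ≤ ·) with hA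
  set B : List (Fin l) := j :: k :: t.sort (· ≤ ·) with hB
  set L : List (Fin l) := A ++ B with hL
  have hAlen : A.length = s.card := Finset.length_sort _
  have hcard : (insert j (insert k s)).card = s.card + 2 := by
    rw [Finset.card_insert_of_notMem (by simp [hjs, hjk]),
        Finset.card_insert_of_notMem hks]
  have hlt : s.card + 2 ≤ l := by
    have := Finset.card_le_univ (insert j (insert k s))
    simpa [hcard] using this
  have htcard : t.card = l - (s.card + 2) := by
    rw [ht, Finset.card_compl, hcard, Fintype.card_fin]
  have hlen : L.length = l := by
    simp only [hL, hB, List.length_append, hAlen, List.length_cons,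
      Finset.length_sort, htcard]
    omega
  have hmemt : ∀ a, a ∈ t ↔ (a ≠ j ∧ a ≠ k ∧ a ∉ s) := by
    intro a
    simp only [ht, Finset.mem_compl, Finset.mem_insert, not_or, ne_eq]
  have hnd : L.Nodup := by
    rw [hL, List.nodup_append]
    refine ⟨Finset.sort_nodup _ _, ?_, ?_⟩
    · rw [hB]
      refine List.nodup_cons.mpr ⟨?_, List.nodup_cons.mpr ⟨?_, Finset.sort_nodup _ _⟩⟩
      · simp only [List.mem_cons, Finset.mem_sort]
        rintro (rfl | hjt)
        · exact hjk rfl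
        · exact ((hmemt j).mp hjt).1 rfl
      · intro hkt
        rw [Finset.mem_sort] at hkt
        exact ((hmemt k).mp hkt).2.1 rfl
    · intro a haA b haB rfl
      rw [hA, Finset.mem_sort] at haA
      rw [hB] at haB
      simp only [List.mem_cons, Finset.mem_sort] at haB
      rcases haB with rfl | rfl | hat
      · exact hjs haA
      · exact hks haA
      · exact ((hmemt a).mp hat).2.2 haA
  have hLget : ∀ (i : ℕ) (hi : i < l), i < L.length := fun i hi => by omega
  set f : Fin l → Fin l := fun i => L[(i : ℕ)]'(hLget i i.2) with hf
  have hinj : Function.Injective f := by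
    intro a b hab
    have := (List.nodup_iff_injective_get.mp hnd)
      (show L.get ⟨a, hLget a a.2⟩ = L.get ⟨b, hLget b b.2⟩ by
        simpa [hf, List.get_eq_getElem] using hab)
    exact Fin.ext (by simpa using congrArg Fin.val this)
  have hbij : Function.Bijective f := Finite.injective_iff_bijective.mp hinj
  set σ : Equiv.Perm (Fin l) := Equiv.ofBijective f hbij with hσ
  have hσapp : ∀ i, σ i = f i := fun i => rfl
  refine ⟨σ, ⟨s.card, by omega⟩, ⟨s.card + 1, by omega⟩, by simp [Fin.le_def], ?_, ?_, ?_⟩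
  · ext a
    constructor
    · rintro ⟨i, hi, rfl⟩
      have hi' : (i : ℕ) < s.card := hi
      have : f i = A[(i : ℕ)]'(by omega) := by
        simp only [hf, hL]
        exact List.getElem_append_left (by omega)
      rw [hσapp, this]
      have h2 : A[(i : ℕ)]'(by omega) ∈ A := List.getElem_mem _
      have h3 : A[(i : ℕ)]'(by omega) ∈ s := (Finset.mem_sort _).mp h2
      exact Set.mem_toFinset.mp h3
    · intro ha
      have has : a ∈ A := by rw [hA, Finset.mem_sort]; simpa [hs] using ha
      obtain ⟨n, hn, hna⟩ := List.mem_iff_getElem.mp has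
      have hn' : n < s.card := by omega
      refine ⟨⟨n, by omega⟩, hn', ?_⟩
      rw [hσapp]
      simp only [hf, hL]
      rw [List.getElem_append_left (by omega)]
      exact hna
  · rw [hσapp]
    simp only [hf, hL]
    rw [List.getElem_append_right (by omega)]
    simp [hB, hAlen]
  · rw [hσapp]
    simp only [hf, hL]
    rw [List.getElem_append_right (by omega)]
    simp [hB, hAlen]

lemma colon_mul_eq {R : Type*} [CommRing R] {l : ℕ} {x : Fin l → R} (hx : IsUSD x)
    (Λ : Set (Fin l)) {j k : Fin l} (hj : j ∉ Λ) (hk : k ∉ Λ) (hjk : j ≠ k) :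
    (Ideal.span (x '' Λ)).colon (Ideal.span {x j * x k}) =
      (Ideal.span (x '' Λ)).colon (Ideal.span {x k}) := by
  obtain ⟨σ, p, q, hpq, hΛ, hpj, hqk⟩ := exists_perm_block Λ j k hj hk hjk
  have hd : IsDSeq (fun i => x (σ i)) := by
    have := hx (fun _ => 1) (fun _ => one_pos) σ
    simpa using this
  have h := hd p q hpq
  have himg : (fun i => x (σ i)) '' {i | i < p} = x '' Λ := by
    rw [← hΛ, ← Set.image_image x σ]
  beta_reduce at h
  rw [himg, hpj, hqk] at h
  exact h

lemma colon_eq {R : Type*} [CommRing R] {l : ℕ} {x : Fin l → R} (hx : IsUSD x)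
    (Λ : Set (Fin l)) {j k : Fin l} (hj : j ∉ Λ) (hk : k ∉ Λ) (hjk : j ≠ k) :
    (Ideal.span (x '' Λ)).colon (Ideal.span {x j}) =
      (Ideal.span (x '' Λ)).colon (Ideal.span {x k}) := by
  rw [← colon_mul_eq hx Λ hk hj hjk.symm, mul_comm, colon_mul_eq hx Λ hj hk hjk]

lemma span_mul_colon_le {R : Type*} [CommRing R] {l : ℕ} {x : Fin l → R} (hx : IsUSD x)
    (Λ : Set (Fin l)) {k : Fin l} (hk : k ∉ Λ) :
    Ideal.span (Set.range x) * (Ideal.span (x '' Λ)).colon (Ideal.span {x k}) ≤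
      Ideal.span (x '' Λ) := by
  refine Ideal.mul_le.mpr fun r hr a ha => ?_
  have hra : ∀ i : Fin l, x i * a ∈ Ideal.span (x '' Λ) := by
    intro i
    by_cases hiΛ : i ∈ Λ
    · exact Ideal.mul_mem_right a _ (Ideal.subset_span ⟨i, hiΛ, rfl⟩)
    · by_cases hik : i = k
      · subst hik
        rw [mul_comm]
        exact Ideal.mem_colon_span_singleton.mp ha
      · have hco : a ∈ (Ideal.span (x '' Λ)).colon (Ideal.span {x i}) := by
          rw [colon_eq hx Λ hiΛ hk hik]; exact ha
        rw [mul_comm]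
        exact Ideal.mem_colon_span_singleton.mp hco
  have hr' : r ∈ (Ideal.span (x '' Λ)).colon (Ideal.span {a}) := by
    refine Ideal.span_le.mpr ?_ hr
    rintro _ ⟨i, rfl⟩
    exact Ideal.mem_colon_span_singleton.mpr (hra i)
  exact Ideal.mem_colon_span_singleton.mp hr'

/-- if `x₁,…,x_l` is an unconditioned strong d-sequence and
`𝔞 ⊆ √(Σ x_i R)`, then every permutation of `x₁,…,x_l` is an `𝔞`-filter regular sequence;
indeed `Σ x_i R` annihilates `((Σ_{i∈Λ} x_i) : Σ_{i∉Λ} x_i)/(Σ_{i∈Λ} x_i)` for all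
`Λ ⊊ {1,…,l}`. -/
theorem usd_filter_regular {R : Type*} [CommRing R] [IsNoetherianRing R] {l : ℕ}
    (x : Fin l → R) (hx : IsUSD x) (𝔞 : Ideal R)
    (h𝔞 : 𝔞 ≤ (Ideal.span (Set.range x)).radical) :
    (∀ σ : Equiv.Perm (Fin l), IsFilterRegular 𝔞 (x ∘ σ)) ∧
      ∀ Λ : Set (Fin l), Λ ≠ Set.univ →
        Ideal.span (Set.range x) *
            ((Ideal.span (x '' Λ)).colon (Ideal.span (x '' Λᶜ))) ≤
          Ideal.span (x '' Λ) := by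
  constructor
  · intro σ
    obtain ⟨m, hm⟩ := Ideal.exists_pow_le_of_le_radical_of_fg h𝔞
      (IsNoetherian.noetherian 𝔞)
    refine ⟨m, fun j => ?_⟩
    have himg : (x ∘ σ) '' {i | i < j} = x '' (σ '' {i | i < j}) :=
      Set.image_comp x σ _
    have hσj : σ j ∉ (⇑σ) '' {i | i < j} := by
      rintro ⟨i, hi, hij⟩
      have hij' : i = j := σ.injective hij
      have hi' : i < j := hi
      rw [hij'] at hi'
      exact lt_irrefl j hi'
    calc 𝔞 ^ m * ((Ideal.span ((x ∘ σ) '' {i | i < j})).colon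
            (Ideal.span {(x ∘ σ) j}))
        ≤ Ideal.span (Set.range x) * ((Ideal.span ((x ∘ σ) '' {i | i < j})).colon
            (Ideal.span {(x ∘ σ) j})) := Ideal.mul_mono_left hm
      _ ≤ Ideal.span ((x ∘ σ) '' {i | i < j}) := by
          rw [himg]
          exact span_mul_colon_le hx _ hσj
  · intro Λ _
    refine Ideal.mul_le.mpr fun r hr a ha => ?_
    have hr' : r ∈ Ideal.span (x '' Λ) ⊔ Ideal.span (x '' Λᶜ) := by
      rw [← Ideal.span_union, ← Set.image_union, Set.union_compl_self,
        Set.image_univ]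
      exact hr
    obtain ⟨u, hu, v, hv, rfl⟩ := Submodule.mem_sup.mp hr'
    have h1 : u * a ∈ Ideal.span (x '' Λ) := Ideal.mul_mem_right a _ hu
    have h2 : v * a ∈ Ideal.span (x '' Λ) := by
      have := Submodule.mem_colon.mp ha v hv
      simpa [mul_comm] using this
    simpa [add_mul] using Ideal.add_mem _ h1 h2
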